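/- Let Ω ⊂ R^N be bounded, N ≥ 3, 2* = 2N/(N−2). Let u_λ ∈ L^{2*}(Ω) be nonnegative, and let (v_n) be a bounded sequence in L^{2*}(Ω) of nonnegative functions with v_n → v a.e. in Ω and v ∈ L^{2*}(Ω). Then ∫_Ω (u_λ + v_n)^{2*−1}(v − v_n) dx = −‖v − v_n‖_{L^{2*}}^{2*} + o(1) as n → ∞. -/

import Mathlib

open Real MeasureTheory Filter Topology


lemma BL_rpow_mul {x : ℝ} (hx : 0 ≤ x) (p : ℝ) (hp : 0 < p) :
    x ^ (p - 1) * x = x ^ p := by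
  rcases eq_or_lt_of_le hx with rfl | hx0
  · simp [Real.zero_rpow hp.ne']
  · calc x ^ (p - 1) * x = x ^ (p - 1) * x ^ (1 : ℝ) := by rw [Real.rpow_one]
      _ = x ^ (p - 1 + 1) := (Real.rpow_add hx0 _ _).symm
      _ = x ^ p := by norm_num

lemma BL_ineq {p : ℝ} (hp1 : 1 < p) {ε : ℝ} (hε : 0 < ε) :
    ∃ C : ℝ, 0 < C ∧ ∀ a t : ℝ, 0 ≤ a → t ≤ a →
      |(a - t) ^ (p - 1) * t + |t| ^ p| ≤ ε * (a - t) ^ p + C * a ^ p := by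
  have hp0 : (0:ℝ) < p := by linarith
  have hq0 : (0:ℝ) < p - 1 := by linarith
  obtain ⟨e, he0, heε, he1⟩ : ∃ e : ℝ, 0 < e ∧ e ≤ ε ∧ e ≤ 1/2 :=
    ⟨min ε 1 / 2, by positivity,
      by linarith [min_le_left ε 1], by linarith [min_le_right ε 1]⟩
  obtain ⟨γ, hγ0, hγ1, hγp⟩ : ∃ γ : ℝ, 0 < γ ∧ γ < 1 ∧ γ ^ (p - 1) = 1 - e := by
    refine ⟨(1 - e) ^ (p - 1)⁻¹, Real.rpow_pos_of_pos (by linarith) _,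
      Real.rpow_lt_one (by linarith) (by linarith) (by positivity), ?_⟩
    exact Real.rpow_inv_rpow (by linarith) hq0.ne'
  have hδ0 : (0:ℝ) < 1 - γ := by linarith
  refine ⟨(1/(1 - γ)) ^ p + 2, by positivity, ?_⟩
  intro a t ha hta
  have hw0 : (0:ℝ) ≤ a - t := by linarith
  have hap2 : (0:ℝ) ≤ a ^ p := Real.rpow_nonneg ha p
  have hεw : 0 ≤ ε * (a - t) ^ p := by positivity
  have hda : (0:ℝ) ≤ (1/(1 - γ)) ^ p * a ^ p :=
    mul_nonneg (Real.rpow_nonneg (by positivity) p) hap2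
  rcases le_or_gt 0 t with h0t | ht0
  · -- 0 ≤ t ≤ a
    have h1 : (a - t) ^ (p - 1) * t ≤ a ^ p := by
      calc (a - t) ^ (p - 1) * t ≤ a ^ (p - 1) * a := by
            apply mul_le_mul (Real.rpow_le_rpow hw0 (by linarith) hq0.le) hta h0t
            positivity
        _ = a ^ p := BL_rpow_mul ha p hp0
    have h2 : |t| ^ p ≤ a ^ p := by
      rw [abs_of_nonneg h0t]; exact Real.rpow_le_rpow h0t hta hp0.le
    have h3 : (0:ℝ) ≤ (a - t) ^ (p - 1) * t + |t| ^ p := by positivity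
    rw [abs_of_nonneg h3]
    nlinarith [hap2, hda]
  · -- t < 0
    have hs0 : 0 < -t := by linarith
    have hsw : -t ≤ a - t := by linarith
    have hsp : (-t) ^ (p - 1) ≤ (a - t) ^ (p - 1) := Real.rpow_le_rpow hs0.le hsw hq0.le
    have habs : |(a - t) ^ (p - 1) * t + |t| ^ p|
        = (a - t) ^ (p - 1) * (-t) - (-t) ^ p := by
      have h1 : |t| = -t := abs_of_neg ht0
      have h2 : (-t) ^ p ≤ (a - t) ^ (p - 1) * (-t) := by
        calc (-t) ^ p = (-t) ^ (p - 1) * (-t) := (BL_rpow_mul hs0.le p hp0).symm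
          _ ≤ (a - t) ^ (p - 1) * (-t) := mul_le_mul_of_nonneg_right hsp hs0.le
      have ht' : (a - t) ^ (p - 1) * t = -((a - t) ^ (p - 1) * (-t)) := by ring
      rw [h1, abs_of_nonpos (by linarith [h2, ht'])]
      linarith [ht']
    rw [habs]
    rcases le_or_gt ((1 - γ) * (a - t)) a with hcase | hcase
    · -- a ≥ δ w
      have hwle : a - t ≤ a / (1 - γ) := by
        rw [le_div_iff₀ hδ0]; linarith [mul_comm (1 - γ) (a - t)]
      have h1 : (a - t) ^ (p - 1) * (-t) ≤ (a - t) ^ p := by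
        calc (a - t) ^ (p - 1) * (-t) ≤ (a - t) ^ (p - 1) * (a - t) :=
              mul_le_mul_of_nonneg_left hsw (by positivity)
          _ = (a - t) ^ p := BL_rpow_mul hw0 p hp0
      have h2 : (a - t) ^ p ≤ (1/(1 - γ)) ^ p * a ^ p := by
        calc (a - t) ^ p ≤ (a / (1 - γ)) ^ p := Real.rpow_le_rpow hw0 hwle hp0.le
          _ = (1/(1 - γ)) ^ p * a ^ p := by
              rw [← Real.mul_rpow (by positivity) ha]
              congr 1; field_simp
      have hsp0 : 0 ≤ (-t) ^ p := Real.rpow_nonneg hs0.le p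
      nlinarith [h1, h2, hεw, hsp0, hap2]
    · -- a < δ w
      have hsge : γ * (a - t) ≤ -t := by nlinarith [hcase]
      have h1 : (1 - e) * (a - t) ^ (p - 1) ≤ (-t) ^ (p - 1) := by
        calc (1 - e) * (a - t) ^ (p - 1) = (γ * (a - t)) ^ (p - 1) := by
              rw [Real.mul_rpow hγ0.le hw0, hγp]
          _ ≤ (-t) ^ (p - 1) := Real.rpow_le_rpow (by positivity) hsge hq0.le
      have h2 : (a - t) ^ (p - 1) * (-t) - (-t) ^ p ≤ e * (a - t) ^ p := by
        have hsps : (-t) ^ p = (-t) ^ (p - 1) * (-t) := (BL_rpow_mul hs0.le p hp0).symm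
        have key : (a - t) ^ (p - 1) * (-t) - (-t) ^ p
            = ((a - t) ^ (p - 1) - (-t) ^ (p - 1)) * (-t) := by rw [hsps]; ring
        rw [key]
        calc ((a - t) ^ (p - 1) - (-t) ^ (p - 1)) * (-t)
            ≤ ((a - t) ^ (p - 1) - (1 - e) * (a - t) ^ (p - 1)) * (a - t) := by
              have hnn : 0 ≤ (a - t) ^ (p - 1) - (1 - e) * (a - t) ^ (p - 1) := by
                nlinarith [Real.rpow_nonneg hw0 (p - 1)]
              exact mul_le_mul (by linarith) hsw hs0.le hnn
          _ = e * ((a - t) ^ (p - 1) * (a - t)) := by ring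
          _ = e * (a - t) ^ p := by rw [BL_rpow_mul hw0 p hp0]
      have hew : e * (a - t) ^ p ≤ ε * (a - t) ^ p :=
        mul_le_mul_of_nonneg_right heε (Real.rpow_nonneg hw0 p)
      nlinarith [h2, hew, hap2, hda]


lemma BL_norm_pow_eq {α : Type*} [MeasurableSpace α] {μ : Measure α} {f : α → ℝ}
    {p : ℝ} (hp : 0 < p) (hf : MemLp f (ENNReal.ofReal p) μ) :
    (eLpNorm f (ENNReal.ofReal p) μ).toReal ^ p = ∫ x, ‖f x‖ ^ p ∂μ := by
  have hP0 : ENNReal.ofReal p ≠ 0 := by simp [ENNReal.ofReal_eq_zero, not_le, hp]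
  have hPt : ENNReal.ofReal p ≠ ⊤ := ENNReal.ofReal_ne_top
  have hI : 0 ≤ ∫ x, ‖f x‖ ^ p ∂μ :=
    integral_nonneg fun x => Real.rpow_nonneg (norm_nonneg _) p
  rw [hf.eLpNorm_eq_integral_rpow_norm hP0 hPt]
  simp only [ENNReal.toReal_ofReal hp.le]
  rw [ENNReal.toReal_ofReal (by positivity)]
  exact Real.rpow_inv_rpow hI hp.ne'

lemma BL_tendsto_integral_zero {α : Type*} [MeasurableSpace α] {μ : Measure α}
    (φ g : ℕ → α → ℝ) (h : α → ℝ) (M : ℝ)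
    (hφint : ∀ n, Integrable (φ n) μ)
    (hgint : ∀ n, Integrable (g n) μ)
    (hg0 : ∀ n, 0 ≤ᵐ[μ] g n)
    (hhint : Integrable h μ) (hh0 : 0 ≤ᵐ[μ] h)
    (hgM : ∀ n, ∫ x, g n x ∂μ ≤ M)
    (hφ0 : ∀ᵐ x ∂μ, Tendsto (fun n => φ n x) atTop (𝓝 0))
    (hdom : ∀ ε : ℝ, 0 < ε → ∃ C : ℝ, 0 ≤ C ∧
      ∀ᵐ x ∂μ, ∀ n, |φ n x| ≤ ε * g n x + C * h x) :
    Tendsto (fun n => ∫ x, φ n x ∂μ) atTop (𝓝 0) := by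
  rw [NormedAddCommGroup.tendsto_nhds_zero]
  intro ε hε
  obtain ⟨ε₁, hε₁0, hε₁M⟩ : ∃ d : ℝ, 0 < d ∧ d * M < ε / 2 := by
    refine ⟨ε / (2 * (max M 0 + 1)), by positivity, ?_⟩
    have hK0 : (0:ℝ) < max M 0 + 1 := by positivity
    have h1 : ε / (2 * (max M 0 + 1)) * (max M 0 + 1) = ε / 2 := by field_simp
    have h2 : M < max M 0 + 1 := by have := le_max_left M 0; linarith
    nlinarith [div_pos hε (by positivity : (0:ℝ) < 2 * (max M 0 + 1))]
  obtain ⟨C, hC0, hdomC⟩ := hdom ε₁ hε₁0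
  have hg0' : ∀ᵐ x ∂μ, ∀ n, 0 ≤ g n x := ae_all_iff.2 hg0
  let ψ : ℕ → α → ℝ := fun n x => max (|φ n x| - ε₁ * g n x) 0
  have hψm : ∀ n, AEStronglyMeasurable (ψ n) μ := by
    intro n
    have h1 : AEStronglyMeasurable (fun x => |φ n x| - ε₁ * g n x) μ := by
      refine AEStronglyMeasurable.sub ?_ ((hgint n).1.const_mul ε₁)
      simpa [Real.norm_eq_abs] using (hφint n).1.norm
    exact h1.sup aestronglyMeasurable_const
  have hψ0 : ∀ n x, 0 ≤ ψ n x := fun n x => le_max_right _ _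
  have hψbd : ∀ n, ∀ᵐ x ∂μ, ‖ψ n x‖ ≤ C * h x := by
    intro n
    filter_upwards [hdomC, hh0] with x hx hhx
    rw [Real.norm_eq_abs, abs_of_nonneg (hψ0 n x)]
    exact max_le (by linarith [hx n]) (mul_nonneg hC0 hhx)
  have hψtend : ∀ᵐ x ∂μ, Tendsto (fun n => ψ n x) atTop (𝓝 0) := by
    filter_upwards [hφ0, hg0'] with x hx hgx
    have habs : Tendsto (fun n => |φ n x|) atTop (𝓝 0) := by
      simpa using hx.abs
    refine squeeze_zero (fun n => hψ0 n x) (fun n => ?_) habs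
    exact max_le (by nlinarith [mul_nonneg hε₁0.le (hgx n)]) (abs_nonneg _)
  have hψint : ∀ n, Integrable (ψ n) μ := fun n =>
    Integrable.mono' (hhint.const_mul C) (hψm n) (hψbd n)
  have hψI : Tendsto (fun n => ∫ x, ψ n x ∂μ) atTop (𝓝 0) := by
    have := tendsto_integral_of_dominated_convergence (μ := μ)
      (F := ψ) (f := fun _ => 0) (fun x => C * h x) hψm (hhint.const_mul C) hψbd hψtend
    simpa using this
  have key : ∀ n, ‖∫ x, φ n x ∂μ‖ ≤ (∫ x, ψ n x ∂μ) + ε₁ * M := by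
    intro n
    have step1 : ‖∫ x, φ n x ∂μ‖ ≤ ∫ x, |φ n x| ∂μ := by
      simpa [Real.norm_eq_abs] using norm_integral_le_integral_norm (φ n) (μ := μ)
    have step2 : ∫ x, |φ n x| ∂μ ≤ ∫ x, (ψ n x + ε₁ * g n x) ∂μ := by
      refine integral_mono_ae (hφint n).abs ((hψint n).add ((hgint n).const_mul ε₁)) ?_
      filter_upwards [hg0'] with x hgx
      have := le_max_left (|φ n x| - ε₁ * g n x) 0
      linarith [this]
    have step3 : ∫ x, (ψ n x + ε₁ * g n x) ∂μ
        = (∫ x, ψ n x ∂μ) + ε₁ * ∫ x, g n x ∂μ := by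
      rw [integral_add (hψint n) ((hgint n).const_mul ε₁), integral_const_mul]
    have step4 : ε₁ * ∫ x, g n x ∂μ ≤ ε₁ * M :=
      mul_le_mul_of_nonneg_left (hgM n) hε₁0.le
    calc ‖∫ x, φ n x ∂μ‖ ≤ ∫ x, |φ n x| ∂μ := step1
      _ ≤ (∫ x, ψ n x ∂μ) + ε₁ * ∫ x, g n x ∂μ := by rw [← step3]; exact step2
      _ ≤ (∫ x, ψ n x ∂μ) + ε₁ * M := by linarith
  have hev : ∀ᶠ n in atTop, ∫ x, ψ n x ∂μ < ε / 2 :=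
    hψI.eventually_lt_const (by linarith)
  filter_upwards [hev] with n hn
  calc ‖∫ x, φ n x ∂μ‖ ≤ (∫ x, ψ n x ∂μ) + ε₁ * M := key n
    _ < ε := by linarith

theorem stmt_7 (N : ℕ) (hN : 3 ≤ N)
    (Ω : Set (EuclideanSpace ℝ (Fin N))) (hΩb : Bornology.IsBounded Ω)
    (p : ℝ) (hp : p = 2 * N / ((N:ℝ) - 2))
    (ulam v : EuclideanSpace ℝ (Fin N) → ℝ) (vn : ℕ → EuclideanSpace ℝ (Fin N) → ℝ)
    (hu : MemLp ulam (ENNReal.ofReal p) (volume.restrict Ω))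
    (hu0 : ∀ᵐ x ∂(volume.restrict Ω), 0 ≤ ulam x)
    (hv : MemLp v (ENNReal.ofReal p) (volume.restrict Ω))
    (hvn : ∀ n, MemLp (vn n) (ENNReal.ofReal p) (volume.restrict Ω))
    (hvn0 : ∀ n, ∀ᵐ x ∂(volume.restrict Ω), 0 ≤ vn n x)
    (hbdd : ∃ M : ENNReal, M < ⊤ ∧
      ∀ n, eLpNorm (vn n) (ENNReal.ofReal p) (volume.restrict Ω) ≤ M)
    (hae : ∀ᵐ x ∂(volume.restrict Ω), Tendsto (fun n => vn n x) atTop (𝓝 (v x))) :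
    Tendsto (fun n =>
      (∫ x in Ω, (ulam x + vn n x) ^ (p - 1) * (v x - vn n x)) +
        (eLpNorm (fun x => v x - vn n x) (ENNReal.ofReal p) (volume.restrict Ω)).toReal ^ p)
      atTop (𝓝 0) := by
  have hN3 : (3:ℝ) ≤ (N:ℝ) := by exact_mod_cast hN
  have hd : (0:ℝ) < (N:ℝ) - 2 := by linarith
  have hp2 : 2 < p := by rw [hp, lt_div_iff₀ hd]; linarith
  have hp1 : 1 < p := by linarith
  have hp0 : 0 < p := by linarith
  have hPtop : ENNReal.ofReal p ≠ ⊤ := ENNReal.ofReal_ne_top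
  have hP0 : ENNReal.ofReal p ≠ 0 := by simp [ENNReal.ofReal_eq_zero, not_le, hp0]
  have hP1 : (1:ENNReal) ≤ ENNReal.ofReal p := by
    rw [← ENNReal.ofReal_one]; exact ENNReal.ofReal_le_ofReal (by linarith)
  -- good points
  have hgood : ∀ᵐ x ∂(volume.restrict Ω), 0 ≤ ulam x ∧ (∀ n, 0 ≤ vn n x) ∧ 0 ≤ v x
      ∧ Tendsto (fun n => vn n x) atTop (𝓝 (v x)) := by
    filter_upwards [hu0, ae_all_iff.2 hvn0, hae] with x h1 h2 h3
    exact ⟨h1, h2, ge_of_tendsto h3 (Eventually.of_forall fun n => h2 n), h3⟩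
  -- conjugate exponent arithmetic for Hölder
  have hpqr : (1:ENNReal)/1 = 1/(ENNReal.ofReal p / ENNReal.ofReal (p-1))
      + 1/ENNReal.ofReal p := by
    have h1 : ENNReal.ofReal p / ENNReal.ofReal (p-1) = ENNReal.ofReal (p/(p-1)) :=
      (ENNReal.ofReal_div_of_pos (by linarith)).symm
    rw [h1, one_div, one_div, one_div,
      ← ENNReal.ofReal_inv_of_pos (div_pos hp0 (by linarith)),
      ← ENNReal.ofReal_inv_of_pos hp0,
      ← ENNReal.ofReal_add (inv_nonneg.mpr (div_pos hp0 (by linarith)).le)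
        (inv_nonneg.mpr hp0.le), inv_one,
      show (p/(p-1))⁻¹ + p⁻¹ = 1 by field_simp; ring,
      ENNReal.ofReal_one]
  -- integrability of the first factor products
  have hI1 : ∀ n, Integrable
      (fun x => (ulam x + vn n x) ^ (p - 1) * (v x - vn n x)) (volume.restrict Ω) := by
    intro n
    have hGn : MemLp (fun x => ‖ulam x + vn n x‖ ^ (p-1))
        (ENNReal.ofReal p / ENNReal.ofReal (p-1)) (volume.restrict Ω) := by
      have := (hu.add (hvn n)).norm_rpow_div (ENNReal.ofReal (p-1))
      rwa [ENNReal.toReal_ofReal (by linarith : (0:ℝ) ≤ p - 1)] at this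
    have hsm : MemLp ((fun x => ‖ulam x + vn n x‖ ^ (p-1)) •
        (fun x => v x - vn n x)) 1 (volume.restrict Ω) :=
      (hv.sub (hvn n)).smul hGn (hpqr := ⟨by simpa only [one_div] using hpqr.symm⟩)
    have hint : Integrable (fun x => ‖ulam x + vn n x‖ ^ (p-1) * (v x - vn n x))
        (volume.restrict Ω) := by
      have := memLp_one_iff_integrable.mp hsm
      simpa [Pi.smul_apply', smul_eq_mul, Pi.mul_def] using this
    refine hint.congr ?_
    filter_upwards [hgood] with x hx
    rw [Real.norm_eq_abs, abs_of_nonneg (by linarith [hx.1, hx.2.1 n])]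
  -- integrability of |v - vn|^p
  have hI2 : ∀ n, Integrable (fun x => |v x - vn n x| ^ p) (volume.restrict Ω) := by
    intro n
    have := (hv.sub (hvn n)).norm_rpow hP0 hPtop
    rw [memLp_one_iff_integrable] at this
    simpa [Real.norm_eq_abs, ENNReal.toReal_ofReal hp0.le] using this
  -- the combined integrand
  have hfun : ∀ n,
      (∫ x in Ω, (ulam x + vn n x) ^ (p - 1) * (v x - vn n x)) +
        (eLpNorm (fun x => v x - vn n x) (ENNReal.ofReal p)
          (volume.restrict Ω)).toReal ^ p
      = ∫ x in Ω, ((ulam x + vn n x) ^ (p - 1) * (v x - vn n x)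
          + |v x - vn n x| ^ p) := by
    intro n
    rw [BL_norm_pow_eq (f := fun x => v x - vn n x) hp0 (hv.sub (hvn n))]
    simp only [Real.norm_eq_abs]
    rw [← integral_add (hI1 n) (hI2 n)]
  have hgoal : (fun n =>
      (∫ x in Ω, (ulam x + vn n x) ^ (p - 1) * (v x - vn n x)) +
        (eLpNorm (fun x => v x - vn n x) (ENNReal.ofReal p)
          (volume.restrict Ω)).toReal ^ p)
      = fun n => ∫ x in Ω, ((ulam x + vn n x) ^ (p - 1) * (v x - vn n x)
          + |v x - vn n x| ^ p) := funext hfun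
  rw [hgoal]
  -- apply the dominated-convergence machinery
  obtain ⟨M, hMt, hM⟩ := hbdd
  have hKt : eLpNorm ulam (ENNReal.ofReal p) (volume.restrict Ω) + M ≠ ⊤ :=
    ENNReal.add_ne_top.mpr ⟨hu.2.ne, hMt.ne⟩
  apply BL_tendsto_integral_zero
    (g := fun n x => ‖ulam x + vn n x‖ ^ p)
    (h := fun x => ‖ulam x + v x‖ ^ p)
    (M := (eLpNorm ulam (ENNReal.ofReal p) (volume.restrict Ω) + M).toReal ^ p)
  · -- integrability of φ
    exact fun n => (hI1 n).add (hI2 n)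
  · -- integrability of g
    intro n
    have := (hu.add (hvn n)).norm_rpow hP0 hPtop
    rw [memLp_one_iff_integrable] at this
    simpa [ENNReal.toReal_ofReal hp0.le] using this
  · -- nonneg of g
    intro n
    exact Eventually.of_forall fun x => Real.rpow_nonneg (norm_nonneg _) p
  · -- integrability of h
    have := (hu.add hv).norm_rpow hP0 hPtop
    rw [memLp_one_iff_integrable] at this
    simpa [ENNReal.toReal_ofReal hp0.le] using this
  · -- nonneg of h
    exact Eventually.of_forall fun x => Real.rpow_nonneg (norm_nonneg _) p
  · -- uniform bound on ∫ g n
    intro n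
    rw [← BL_norm_pow_eq (f := fun x => ulam x + vn n x) hp0 (hu.add (hvn n))]
    apply Real.rpow_le_rpow ENNReal.toReal_nonneg ?_ hp0.le
    apply ENNReal.toReal_mono hKt
    calc eLpNorm (fun x => ulam x + vn n x) (ENNReal.ofReal p) (volume.restrict Ω)
        ≤ eLpNorm ulam (ENNReal.ofReal p) (volume.restrict Ω)
          + eLpNorm (vn n) (ENNReal.ofReal p) (volume.restrict Ω) :=
          eLpNorm_add_le hu.1 (hvn n).1 hP1
      _ ≤ _ := add_le_add le_rfl (hM n)
  · -- a.e. convergence to 0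
    filter_upwards [hgood] with x hx
    obtain ⟨hx1, hx2, hx3, hx4⟩ := hx
    have h1 : Tendsto (fun n => ulam x + vn n x) atTop (𝓝 (ulam x + v x)) :=
      tendsto_const_nhds.add hx4
    have h2 : Tendsto (fun n => (ulam x + vn n x) ^ (p-1)) atTop
        (𝓝 ((ulam x + v x) ^ (p-1))) :=
      ((Real.continuousAt_rpow_const _ _ (Or.inr (by linarith))).tendsto).comp h1
    have h3 : Tendsto (fun n => v x - vn n x) atTop (𝓝 0) := by
      have := tendsto_const_nhds.sub hx4 (f := fun _ : ℕ => v x)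
      simpa using this
    have h4 := h2.mul h3
    have habs : Tendsto (fun n => |v x - vn n x|) atTop (𝓝 0) := by
      simpa using h3.abs
    have h5 : Tendsto (fun n => |v x - vn n x| ^ p) atTop (𝓝 0) := by
      have := ((Real.continuousAt_rpow_const 0 p (Or.inr hp0.le)).tendsto).comp habs
      simpa [Function.comp_def, Real.zero_rpow hp0.ne'] using this
    simpa using h4.add h5
  · -- domination
    intro ε hε
    obtain ⟨C, hC0, hC⟩ := BL_ineq hp1 hε
    refine ⟨C, hC0.le, ?_⟩
    filter_upwards [hgood] with x hx
    obtain ⟨hx1, hx2, hx3, _⟩ := hx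
    intro n
    have key := hC (ulam x + v x) (v x - vn n x) (by linarith) (by linarith [hx2 n])
    have hat : ulam x + v x - (v x - vn n x) = ulam x + vn n x := by ring
    rw [hat] at key
    rw [Real.norm_eq_abs, Real.norm_eq_abs,
      abs_of_nonneg (by linarith [hx2 n] : (0:ℝ) ≤ ulam x + vn n x),
      abs_of_nonneg (by linarith : (0:ℝ) ≤ ulam x + v x)]
    exact key
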